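/- Let d ≥ 2 and q ≥ 2 be integers and let k satisfy 1 ≤ k ≤ d − 1. Then 1 < Δ(k, d; q) < (1 − q^{-1} − q^{-2})^{-1}. Moreover Δ(k, d; 2) < 4, Δ(k, d; 3) < 9/5, Δ(k, d; q) < 16/11 for q ≥ 4, and Δ(k, d; q) < 8/7 for q ≥ 9. -/

import Mathlib

/-- `ω(k, d; t) = ∏_{i=k}^{d} (1 - t^{-i})`. -/
noncomputable def omegaProd (k d : ℕ) (t : ℝ) : ℝ :=
  ∏ i ∈ Finset.Icc k d, (1 - (t ^ i)⁻¹)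

/-- `Δ(k, d; t) = ω(k+1, d; t) / ω(1, d-k; t)`. -/
noncomputable def Delta (k d : ℕ) (t : ℝ) : ℝ :=
  omegaProd (k + 1) d t / omegaProd 1 (d - k) t

/-- Euler-type lower bound: `∏_{i=1}^m (1 - x^i) ≥ 1 - x - x² + x^(m+1)`. -/
lemma prodD_lb (x : ℝ) (hx0 : 0 ≤ x) (hx1 : x ≤ 1) (m : ℕ) (hm : 1 ≤ m) :
    1 - x - x ^ 2 + x ^ (m + 1) ≤ ∏ i ∈ Finset.Icc 1 m, (1 - x ^ i) := by
  induction m, hm using Nat.le_induction with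
  | base =>
    rw [Finset.Icc_self, Finset.prod_singleton]
    have h : x ^ (1 + 1) = x ^ 2 := by ring
    rw [h, pow_one]
    linarith
  | succ m hm ih =>
    rw [Finset.prod_Icc_succ_top (by omega : 1 ≤ m + 1)]
    have ha : x ^ m ≤ x := by
      calc x ^ m ≤ x ^ 1 := pow_le_pow_of_le_one hx0 hx1 hm
      _ = x := pow_one x
    have ha0 : 0 ≤ x ^ m := pow_nonneg hx0 m
    have hc : 0 ≤ 1 - x ^ (m + 1) := by
      have := pow_le_one₀ hx0 hx1 (n := m + 1)
      linarith
    have h2 := mul_le_mul_of_nonneg_right ih hc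
    have hxm : x ^ (m + 1) = x ^ m * x := pow_succ x m
    have hxm2 : x ^ (m + 1 + 1) = x ^ m * x ^ 2 := by ring
    nlinarith [mul_nonneg (mul_nonneg ha0 (sq_nonneg x)) (sub_nonneg.2 ha)]

/-- Lemma: bounds for `Δ(k, d; q)` with `q ≥ 2` and `1 ≤ k ≤ d - 1`. -/
theorem Delta_pos_bounds
    (d q k : ℕ) (hd : 2 ≤ d) (hq : 2 ≤ q) (hk1 : 1 ≤ k) (hk2 : k ≤ d - 1) :
    (1 < Delta k d (q : ℝ) ∧ Delta k d (q : ℝ) < (1 - (q : ℝ)⁻¹ - ((q : ℝ) ^ 2)⁻¹)⁻¹) ∧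
    (q = 2 → Delta k d (q : ℝ) < 4) ∧
    (q = 3 → Delta k d (q : ℝ) < 9 / 5) ∧
    (4 ≤ q → Delta k d (q : ℝ) < 16 / 11) ∧
    (9 ≤ q → Delta k d (q : ℝ) < 8 / 7) := by
  set x : ℝ := (q : ℝ)⁻¹ with hxdef
  have hq2 : (2 : ℝ) ≤ (q : ℝ) := by exact_mod_cast hq
  have hq0 : (0 : ℝ) < (q : ℝ) := by linarith
  have hx0 : 0 < x := inv_pos.2 hq0
  have hx2 : x ≤ 1 / 2 := by
    rw [hxdef]
    rw [inv_le_comm₀ hq0 (by norm_num)]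
    linarith
  have hx1 : x < 1 := by linarith
  set m : ℕ := d - k with hmdef
  have hm1 : 1 ≤ m := by omega
  have hkm : k + m = d := by omega
  -- rewrite the numerator as a product over `Icc 1 m`
  have hinv : ∀ i : ℕ, ((q : ℝ) ^ i)⁻¹ = x ^ i := fun i => (inv_pow (q : ℝ) i).symm
  have hnum : omegaProd (k + 1) d (q : ℝ) =
      ∏ i ∈ Finset.Icc 1 m, (1 - x ^ (k + i)) := by
    unfold omegaProd
    have : Finset.Icc (k + 1) d = Finset.image (k + ·) (Finset.Icc 1 m) := by
      rw [Finset.image_add_left_Icc, hkm]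
    rw [this, Finset.prod_image (by intro a _ b _ h; simp only at h; omega)]
    exact Finset.prod_congr rfl fun i _ => by rw [hinv]
  have hden : omegaProd 1 m (q : ℝ) = ∏ i ∈ Finset.Icc 1 m, (1 - x ^ i) := by
    unfold omegaProd
    exact Finset.prod_congr rfl fun i _ => by rw [hinv]
  set N : ℝ := ∏ i ∈ Finset.Icc 1 m, (1 - x ^ (k + i)) with hN
  set D : ℝ := ∏ i ∈ Finset.Icc 1 m, (1 - x ^ i) with hD
  have hDelta : Delta k d (q : ℝ) = N / D := by
    unfold Delta
    rw [hnum, ← hmdef, hden]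
  have hfac : ∀ i : ℕ, 1 ≤ i → 0 < 1 - x ^ i := by
    intro i hi
    have h1 : x ^ i ≤ x ^ 1 := pow_le_pow_of_le_one hx0.le hx1.le hi
    rw [pow_one] at h1
    linarith
  have hDpos : 0 < D :=
    Finset.prod_pos fun i hi => hfac i (Finset.mem_Icc.1 hi).1
  have hNpos : 0 < N :=
    Finset.prod_pos fun i hi => hfac (k + i) (by have := (Finset.mem_Icc.1 hi).1; omega)
  have hne : (Finset.Icc 1 m).Nonempty := ⟨1, by simp [Finset.mem_Icc]; omega⟩
  -- D < N, hence 1 < Δ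
  have hDN : D < N := by
    apply Finset.prod_lt_prod_of_nonempty
      (fun i hi => hfac i (Finset.mem_Icc.1 hi).1) _ hne
    intro i _
    have : x ^ (k + i) < x ^ i := by
      apply pow_lt_pow_right_of_lt_one₀ hx0 hx1
      omega
    linarith
  have h1 : 1 < Delta k d (q : ℝ) := by
    rw [hDelta]
    rw [lt_div_iff₀ hDpos]
    linarith
  -- N ≤ 1
  have hN1 : N ≤ 1 := by
    apply Finset.prod_le_one
      (fun i hi => (hfac (k + i) (by have := (Finset.mem_Icc.1 hi).1; omega)).le)
    intro i _
    have : 0 < x ^ (k + i) := pow_pos hx0 _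
    linarith
  -- D > 1 - x - x²
  have hDlb : 1 - x - x ^ 2 < D := by
    have := prodD_lb x hx0.le hx1.le m hm1
    have hp : 0 < x ^ (m + 1) := pow_pos hx0 _
    rw [hD]
    linarith
  have hBpos : 0 < 1 - x - x ^ 2 := by nlinarith
  -- Δ < (1 - x - x²)⁻¹
  have hub : Delta k d (q : ℝ) < (1 - x - x ^ 2)⁻¹ := by
    rw [hDelta, div_lt_iff₀ hDpos]
    have h' : 1 < (1 - x - x ^ 2)⁻¹ * D := by
      rw [inv_mul_eq_div, lt_div_iff₀ hBpos, one_mul]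
      exact hDlb
    linarith
  have hrw : (1 - (q : ℝ)⁻¹ - ((q : ℝ) ^ 2)⁻¹)⁻¹ = (1 - x - x ^ 2)⁻¹ := by
    rw [hxdef, inv_pow]
  refine ⟨⟨h1, by rw [hrw]; exact hub⟩, ?_, ?_, ?_, ?_⟩
  · intro hq2'
    subst hq2'
    have h4 : (1 - x - x ^ 2)⁻¹ = 4 := by
      rw [hxdef]; norm_num
    exact lt_of_lt_of_eq hub h4
  · intro hq3
    subst hq3
    have h9 : (1 - x - x ^ 2)⁻¹ = 9 / 5 := by
      rw [hxdef]; norm_num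
    exact lt_of_lt_of_eq hub h9
  · intro hq4
    have hq4' : (4 : ℝ) ≤ (q : ℝ) := by exact_mod_cast hq4
    have hx4 : x ≤ 1 / 4 := by
      rw [hxdef, inv_le_comm₀ hq0 (by norm_num)]
      linarith
    have hlb : (11 / 16 : ℝ) ≤ 1 - x - x ^ 2 := by nlinarith
    have hle : (1 - x - x ^ 2)⁻¹ ≤ 16 / 11 := by
      rw [inv_le_comm₀ hBpos (by norm_num)]
      linarith
    exact lt_of_lt_of_le hub hle
  · intro hq9
    have hq9' : (9 : ℝ) ≤ (q : ℝ) := by exact_mod_cast hq9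
    have hx9 : x ≤ 1 / 9 := by
      rw [hxdef, inv_le_comm₀ hq0 (by norm_num)]
      linarith
    have hlb : (7 / 8 : ℝ) ≤ 1 - x - x ^ 2 := by nlinarith
    have hle : (1 - x - x ^ 2)⁻¹ ≤ 8 / 7 := by
      rw [inv_le_comm₀ hBpos (by norm_num)]
      linarith
    exact lt_of_lt_of_le hub hle
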